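/- Under the same setup with cumulative counts n_k = max(1, v_1 + ... + v_{k-1}) and doubling condition v_k ≤ n_k for all k, the sum over k = 1 to m of v_k / n_k is at most 2 + 2 * log(n_{m+1}), where n_{m+1} = max(1, v_1 + ... + v_m) and log denotes the natural logarithm. -/

import Mathlib

lemma key_ineq (a b : ℕ) (h1 : 1 ≤ b) (hv : a ≤ b) :
    (a : ℝ) / b ≤ 2 * (Real.log (b + a) - Real.log b) := by
  have hb : (0:ℝ) < b := by exact_mod_cast h1
  have ha : (0:ℝ) ≤ a := by positivity
  have hba : (0:ℝ) < (b:ℝ) + a := by linarith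
  have hlog := Real.log_le_sub_one_of_pos (show (0:ℝ) < b / (b + a) by positivity)
  rw [Real.log_div (ne_of_gt hb) (ne_of_gt hba)] at hlog
  have hab : (a:ℝ) ≤ b := by exact_mod_cast hv
  have h2 : (a:ℝ)/b ≤ 2 * ((a:ℝ)/(b+a)) := by
    rw [← mul_div_assoc, div_le_div_iff₀ hb hba]
    nlinarith
  have hsum : (a:ℝ)/(b+a) + (b:ℝ)/(b+a) = 1 := by
    rw [← add_div, add_comm]
    exact div_self (ne_of_gt hba)
  linarith

theorem stmt_1 (m : ℕ) (hm : 1 ≤ m) (v : ℕ → ℕ) (n : ℕ → ℕ)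
    (hn : ∀ k, n k = max 1 (∑ i ∈ Finset.Ico 1 k, v i))
    (hdbl : ∀ k ∈ Finset.Icc 1 m, v k ≤ n k) :
    ∑ k ∈ Finset.Icc 1 m, (v k : ℝ) / (n k : ℝ) ≤ 2 + 2 * Real.log (n (m + 1)) := by
  clear hm
  induction m with
  | zero =>
    have h1 : n 1 = 1 := by rw [hn 1]; simp
    rw [show Finset.Icc 1 0 = ∅ from rfl, Finset.sum_empty, h1]
    simp
  | succ m ih =>
    have hdbl' : ∀ k ∈ Finset.Icc 1 m, v k ≤ n k := fun k hk => hdbl k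
      (Finset.mem_Icc.mpr ⟨(Finset.mem_Icc.mp hk).1, le_trans (Finset.mem_Icc.mp hk).2 (Nat.le_succ m)⟩)
    have ih' := ih hdbl'
    have hvm := hdbl (m+1) (Finset.mem_Icc.mpr ⟨Nat.le_add_left 1 m, le_refl _⟩)
    rw [Finset.sum_Icc_succ_top (Nat.le_add_left 1 m)]
    set S := ∑ i ∈ Finset.Ico 1 (m+1), v i with hS
    have hnm1 : n (m+1) = max 1 S := hn (m+1)
    have hnm2 : n (m+2) = max 1 (S + v (m+1)) := by
      rw [hn (m+2), Finset.sum_Ico_succ_top (Nat.le_add_left 1 m)]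
    rcases Nat.eq_zero_or_pos S with h0 | hpos
    · -- all v k = 0 for k ≤ m, n(m+1) = 1
      have hallz : ∀ i ∈ Finset.Ico 1 (m+1), v i = 0 := by
        intro i hi
        exact (Finset.sum_eq_zero_iff.mp (by rw [← hS]; exact h0)) i hi
      have hsum0 : ∑ k ∈ Finset.Icc 1 m, (v k : ℝ) / (n k : ℝ) = 0 := by
        apply Finset.sum_eq_zero
        intro i hi
        rw [hallz i (by rw [Finset.mem_Ico]; exact ⟨(Finset.mem_Icc.mp hi).1, Nat.lt_succ_of_le (Finset.mem_Icc.mp hi).2⟩)]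
        simp
      have hn1 : n (m+1) = 1 := by rw [hnm1, h0]; omega
      have hv1 : v (m+1) ≤ 1 := le_trans hvm (le_of_eq hn1)
      have hlog : 0 ≤ Real.log (n (m+2)) := by
        apply Real.log_nonneg
        have : 1 ≤ n (m+2) := by rw [hnm2]; exact le_max_left _ _
        exact_mod_cast this
      have : (v (m+1) : ℝ) / (n (m+1)) ≤ 1 := by
        rw [hn1]
        simp
        exact_mod_cast hv1
      rw [hsum0]
      linarith
    · have hn1 : n (m+1) = S := by rw [hnm1]; omega
      have hn2 : n (m+2) = S + v (m+1) := by rw [hnm2]; omega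
      have hkey := key_ineq (v (m+1)) (n (m+1)) (by omega) hvm
      have hcast : ((n (m+1) : ℝ) + (v (m+1) : ℝ)) = (n (m+2) : ℝ) := by
        rw [hn1, hn2]; push_cast; ring
      rw [hcast] at hkey
      have : (m + 1 + 1) = m + 2 := rfl
      rw [this]
      linarith
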